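/- arXiv:2409.00002 — 4 statements merged into one kernel-verified Lean document; each statement's English description precedes it below -/
import Mathlib

section
/- Let C : ℝ^d → ℝ^d satisfy ‖C(x)/p − x‖² ≤ (1−φ)‖x‖² for all x, with p > 0 and φ ∈ (0,1]. Then every (locally absolutely continuous) solution of the ODE ẋ = −C(x) satisfies d/dt (‖x(t)‖²/p) ≤ −φ‖x(t)‖², and consequently ‖x(t)‖² ≤ ‖x(0)‖² e^{−pφ t} for all t ≥ 0. -/
open RealInnerProductSpace

theorem stmt2 (d : ℕ) (C : EuclideanSpace ℝ (Fin d) → EuclideanSpace ℝ (Fin d))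
    (p φ : ℝ) (hp : 0 < p) (hφ0 : 0 < φ) (hφ1 : φ ≤ 1)
    (h : ∀ x, ‖p⁻¹ • C x - x‖ ^ 2 ≤ (1 - φ) * ‖x‖ ^ 2)
    (x : ℝ → EuclideanSpace ℝ (Fin d))
    (hx : ∀ t : ℝ, HasDerivAt x (-(C (x t))) t) :
    (∀ t : ℝ, 0 ≤ t → deriv (fun s => ‖x s‖ ^ 2 / p) t ≤ -φ * ‖x t‖ ^ 2) ∧
      (∀ t : ℝ, 0 ≤ t → ‖x t‖ ^ 2 ≤ ‖x 0‖ ^ 2 * Real.exp (-(p * φ) * t)) := by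
  have key : ∀ t : ℝ, p * φ * ‖x t‖ ^ 2 ≤ 2 * ⟪C (x t), x t⟫ := by
    intro t
    have h1 := h (x t)
    rw [norm_sub_sq_real, real_inner_smul_left] at h1
    have h2 : (0:ℝ) ≤ ‖p⁻¹ • C (x t)‖ ^ 2 := by positivity
    have h3 : p * p⁻¹ = 1 := mul_inv_cancel₀ hp.ne'
    have h5 : φ * ‖x t‖ ^ 2 ≤ 2 * (p⁻¹ * ⟪C (x t), x t⟫) := by linarith
    calc p * φ * ‖x t‖ ^ 2 = p * (φ * ‖x t‖ ^ 2) := by ring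
      _ ≤ p * (2 * (p⁻¹ * ⟪C (x t), x t⟫)) := mul_le_mul_of_nonneg_left h5 hp.le
      _ = (p * p⁻¹) * (2 * ⟪C (x t), x t⟫) := by ring
      _ = 2 * ⟪C (x t), x t⟫ := by rw [h3, one_mul]
  have hg : ∀ t : ℝ, HasDerivAt (fun s => ‖x s‖ ^ 2) (-(2 * ⟪C (x t), x t⟫)) t := by
    intro t
    have := (hx t).inner ℝ (hx t)
    have heq : (fun s => ⟪x s, x s⟫) = fun s => ‖x s‖ ^ 2 := by
      funext s; rw [real_inner_self_eq_norm_sq]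
    rw [heq] at this
    refine this.congr_deriv ?_
    rw [inner_neg_left, inner_neg_right, real_inner_comm]
    ring
  constructor
  · intro t _
    have hd : HasDerivAt (fun s => ‖x s‖ ^ 2 / p) (-(2 * ⟪C (x t), x t⟫) / p) t :=
      (hg t).div_const p
    rw [hd.deriv, div_le_iff₀ hp]
    nlinarith [key t]
  · intro t ht
    set K := p * φ with hK
    have hKpos : 0 < K := mul_pos hp hφ0
    have hf : ∀ s : ℝ, HasDerivAt (fun u => ‖x u‖ ^ 2 * Real.exp (K * u))
        ((-(2 * ⟪C (x s), x s⟫)) * Real.exp (K * s) + ‖x s‖ ^ 2 * (K * Real.exp (K * s))) s := by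
      intro s
      have hexp : HasDerivAt (fun u : ℝ => Real.exp (K * u)) (K * Real.exp (K * s)) s := by
        simpa [mul_comm] using ((hasDerivAt_id s).const_mul K).exp
      exact (hg s).mul hexp
    have hanti : AntitoneOn (fun u => ‖x u‖ ^ 2 * Real.exp (K * u)) (Set.Ici 0) := by
      apply antitoneOn_of_deriv_nonpos (convex_Ici 0)
      · exact fun s _ => (hf s).differentiableAt.continuousAt.continuousWithinAt
      · exact fun s _ => (hf s).differentiableAt.differentiableWithinAt
      · intro s _
        rw [(hf s).deriv]
        have := key s
        have he : 0 < Real.exp (K * s) := Real.exp_pos _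
        nlinarith
    have hle := hanti Set.self_mem_Ici (Set.mem_Ici.mpr ht) ht
    simp only [mul_zero, Real.exp_zero, mul_one] at hle
    have he : 0 < Real.exp (K * t) := Real.exp_pos _
    rw [neg_mul, Real.exp_neg, ← div_eq_mul_inv, le_div_iff₀ he]
    exact hle
end

section
/- Let C_{2b}(x) = (‖x‖_∞ / 2)·sgn(x) be the standard uniform quantizer on ℝ^d, with the convention C_{2b}(0) = 0. Then ‖C_{2b}(x)/(d/2) − x‖² ≤ (1 − 1/d²)‖x‖² for all x ∈ ℝ^d. -/
-- helper: sign t * t = |t|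
lemma sign_mul_self_eq_abs (t : ℝ) : Real.sign t * t = |t| := by
  rcases lt_trichotomy t 0 with h | h | h
  · rw [Real.sign_of_neg h, abs_of_neg h]; ring
  · simp [h]
  · rw [Real.sign_of_pos h, abs_of_pos h]; ring

lemma sign_sq_le_one (t : ℝ) : (Real.sign t)^2 ≤ 1 := by
  rcases lt_trichotomy t 0 with h | h | h
  · rw [Real.sign_of_neg h]; norm_num
  · simp [h]
  · rw [Real.sign_of_pos h]; norm_num

lemma key (D M S A Q : ℝ) (hD : 1 ≤ D) (hM0 : 0 ≤ M) (hMA : M ≤ A)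
    (hQ : Q ≤ M * A) (hQ0 : 0 ≤ Q) (hS0 : 0 ≤ S) (hSD : S ≤ D) :
    (M / D) ^ 2 * S - 2 * (M / D) * A + Q ≤ (1 - 1 / D ^ 2) * Q := by
  have hD0 : 0 < D := lt_of_lt_of_le one_pos hD
  have hD2 : (0:ℝ) < D ^ 2 := by positivity
  have hA0 : 0 ≤ A := hM0.trans hMA
  have p1 : M ^ 2 * S ≤ M ^ 2 * D := mul_le_mul_of_nonneg_left hSD (by positivity)
  have p2 : M ^ 2 * D ≤ M * A * D :=
    mul_le_mul_of_nonneg_right (by nlinarith [mul_le_mul_of_nonneg_left hMA hM0]) hD0.le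
  have p3 : Q * 1 ≤ M * A * D := mul_le_mul hQ hD (by norm_num) (mul_nonneg hM0 hA0)
  have h2 : M ^ 2 * S + Q ≤ 2 * (M * A * D) := by linarith
  have e : (1 - 1 / D ^ 2) * Q - ((M / D) ^ 2 * S - 2 * (M / D) * A + Q)
      = (2 * (M * A * D) - (M ^ 2 * S + Q)) / D ^ 2 := by
    field_simp
    ring
  have h3 : 0 ≤ (2 * (M * A * D) - (M ^ 2 * S + Q)) / D ^ 2 :=
    div_nonneg (by linarith) hD2.le
  linarith

theorem stmt4 (d : ℕ) (hd : 0 < d) (x : EuclideanSpace ℝ (Fin d)) :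
    haveI : Nonempty (Fin d) := ⟨⟨0, hd⟩⟩
    ‖((d : ℝ) / 2)⁻¹ •
        (WithLp.equiv 2 (Fin d → ℝ)).symm
          (fun i => Finset.univ.sup' Finset.univ_nonempty (fun j => |x j|) / 2 *
            Real.sign (x i)) - x‖ ^ 2
      ≤ (1 - 1 / (d : ℝ) ^ 2) * ‖x‖ ^ 2 := by
  have hne : (Finset.univ : Finset (Fin d)).Nonempty := ⟨⟨0, hd⟩, Finset.mem_univ _⟩
  have hd1 : (1 : ℝ) ≤ d := by exact_mod_cast hd
  have hd0 : (0 : ℝ) < d := lt_of_lt_of_le one_pos hd1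
  haveI : Nonempty (Fin d) := ⟨⟨0, hd⟩⟩
  show _ ≤ _
  set M : ℝ := Finset.univ.sup' Finset.univ_nonempty (fun j => |x j|) with hMdef
  have hnorm : ∀ (y : EuclideanSpace ℝ (Fin d)), ‖y‖ ^ 2 = ∑ i, (y i) ^ 2 := by
    intro y
    rw [EuclideanSpace.norm_eq, Real.sq_sqrt (by positivity)]
    simp [Real.norm_eq_abs, sq_abs]
  have hcoord : ∀ i, (((d : ℝ) / 2)⁻¹ •
      (WithLp.equiv 2 (Fin d → ℝ)).symm (fun i => M / 2 * Real.sign (x i)) - x) i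
      = M / d * Real.sign (x i) - x i := by
    intro i
    simp only [PiLp.smul_apply, PiLp.sub_apply, WithLp.equiv_symm_apply, PiLp.toLp_apply, smul_eq_mul]
    field_simp
    try ring
  rw [hnorm, hnorm]
  simp only [hcoord]
  have expand : ∑ i, (M / d * Real.sign (x i) - x i) ^ 2
      = (M / d) ^ 2 * (∑ i, (Real.sign (x i)) ^ 2)
        - 2 * (M / d) * (∑ i, |x i|) + ∑ i, (x i) ^ 2 := by
    rw [Finset.mul_sum, Finset.mul_sum, ← Finset.sum_sub_distrib, ← Finset.sum_add_distrib]
    refine Finset.sum_congr rfl fun i _ => ?_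
    have h := sign_mul_self_eq_abs (x i)
    linear_combination (-(2 * (M / d))) * h
  rw [expand]
  have hM0 : 0 ≤ M :=
    le_trans (abs_nonneg (x ⟨0, hd⟩)) (Finset.le_sup' (fun j => |x j|) (Finset.mem_univ (⟨0, hd⟩ : Fin d)))
  have hMA : M ≤ ∑ i, |x i| :=
    Finset.sup'_le _ _ fun j _ =>
      Finset.single_le_sum (f := fun i => |x i|) (fun i _ => abs_nonneg _) (Finset.mem_univ j)
  have hQ : (∑ i, (x i) ^ 2) ≤ M * ∑ i, |x i| := by
    rw [Finset.mul_sum]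
    refine Finset.sum_le_sum fun i _ => ?_
    calc (x i) ^ 2 = |x i| * |x i| := by rw [← sq_abs]; ring
    _ ≤ M * |x i| :=
      mul_le_mul_of_nonneg_right (Finset.le_sup' (fun j => |x j|) (Finset.mem_univ i)) (abs_nonneg _)
  have hS : (∑ i, (Real.sign (x i)) ^ 2) ≤ (d : ℝ) := by
    calc (∑ i, (Real.sign (x i)) ^ 2) ≤ ∑ _i : Fin d, (1 : ℝ) :=
      Finset.sum_le_sum fun i _ => sign_sq_le_one (x i)
    _ = d := by simp
  exact key (d : ℝ) M _ _ _ hd1 hM0 hMA hQ (by positivity)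
    (Finset.sum_nonneg fun i _ => sq_nonneg _) hS
end

section
/- Consider the scaled flooring map C₃(x,t) = γ^t ⌊x/γ^t⌋ on ℝ^d (componentwise floor) with e^{−1} < γ < 1. Along any solution of ẋ = −C₃(x,t), the rescaled variable z(t) = x(t)/γ^t satisfies ż = −⌊z⌋ − ln(γ)·z, and the function V(z) = ‖z‖²/2 satisfies V̇ ≤ −(1 + ln γ)·V + d / (2(1 + ln γ)). -/
open Real

private lemma stmt5_aux (a v w : ℝ) (ha : 0 < a) (h1 : w ≤ v) (h2 : v < w + 1) :
    (-(v * w) - (a - 1) * (v * v) - -a * (v * v) / 2) * (2 * a) ≤ 1 := by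
  rcases le_or_gt 0 v with h | h
  · nlinarith [sq_nonneg (a * v - 1),
      mul_nonneg (mul_nonneg (by linarith : (0:ℝ) ≤ 2 * a) h)
        (by linarith : (0:ℝ) ≤ w - v + 1)]
  · nlinarith [sq_nonneg (a * v), mul_nonneg (neg_nonneg.2 h.le) (sub_nonneg.2 h1)]

theorem stmt5 (d : ℕ) (γ : ℝ) (hγ1 : Real.exp (-1) < γ) (hγ2 : γ < 1)
    (x : ℝ → EuclideanSpace ℝ (Fin d))
    (hx : ∀ t : ℝ, HasDerivAt x
      (-((γ ^ t) • (WithLp.equiv 2 (Fin d → ℝ)).symm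
        (fun i => (⌊(γ ^ t)⁻¹ * x t i⌋ : ℝ)))) t) :
    (∀ t : ℝ, HasDerivAt (fun s => (γ ^ s)⁻¹ • x s)
        (-((WithLp.equiv 2 (Fin d → ℝ)).symm (fun i => (⌊(γ ^ t)⁻¹ * x t i⌋ : ℝ)))
          - Real.log γ • ((γ ^ t)⁻¹ • x t)) t) ∧
      (∀ t : ℝ, deriv (fun s => ‖(γ ^ s)⁻¹ • x s‖ ^ 2 / 2) t
          ≤ -(1 + Real.log γ) * (‖(γ ^ t)⁻¹ • x t‖ ^ 2 / 2)
            + d / (2 * (1 + Real.log γ))) := by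
  have hγ0 : 0 < γ := lt_trans (Real.exp_pos _) hγ1
  have hγt : ∀ t : ℝ, (0:ℝ) < γ ^ t := fun t => Real.rpow_pos_of_pos hγ0 t
  have hlog : -1 < Real.log γ := by
    have := Real.log_lt_log (Real.exp_pos (-1)) hγ1
    rwa [Real.log_exp] at this
  set a : ℝ := 1 + Real.log γ with ha
  have ha0 : 0 < a := by simp only [ha]; linarith
  have h1 : ∀ t : ℝ, HasDerivAt (fun s => (γ ^ s)⁻¹ • x s)
      (-((WithLp.equiv 2 (Fin d → ℝ)).symm (fun i => (⌊(γ ^ t)⁻¹ * x t i⌋ : ℝ)))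
        - Real.log γ • ((γ ^ t)⁻¹ • x t)) t := by
    intro t
    have hc : HasDerivAt (fun s : ℝ => (γ ^ s)⁻¹)
        (-(γ ^ t * Real.log γ) / (γ ^ t) ^ 2) t :=
      ((Real.hasStrictDerivAt_const_rpow hγ0 t).hasDerivAt).inv (hγt t).ne'
    have h := hc.smul (hx t)
    have e1 : ((γ ^ t)⁻¹ : ℝ) • (-((γ ^ t) • (WithLp.equiv 2 (Fin d → ℝ)).symm
        (fun i => (⌊(γ ^ t)⁻¹ * x t i⌋ : ℝ))))
        = -((WithLp.equiv 2 (Fin d → ℝ)).symm (fun i => (⌊(γ ^ t)⁻¹ * x t i⌋ : ℝ))) := by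
      rw [smul_neg, smul_smul, inv_mul_cancel₀ (hγt t).ne', one_smul]
    have e2 : (-(γ ^ t * Real.log γ) / (γ ^ t) ^ 2) • x t
        = -(Real.log γ • ((γ ^ t)⁻¹ • x t)) := by
      rw [smul_smul, ← neg_smul]
      congr 1
      field_simp
    rw [e1, e2] at h
    rw [sub_eq_add_neg]
    exact h
  refine ⟨h1, fun t => ?_⟩
  set u : Fin d → ℝ := fun i => (γ ^ t)⁻¹ * x t i with hu
  set f : EuclideanSpace ℝ (Fin d) :=
    (WithLp.equiv 2 (Fin d → ℝ)).symm (fun i => (⌊u i⌋ : ℝ)) with hf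
  set z : ℝ → EuclideanSpace ℝ (Fin d) := fun s => (γ ^ s)⁻¹ • x s with hz
  have hzt : ∀ i, z t i = u i := fun i => rfl
  have hV : HasDerivAt (fun s => ‖(γ ^ s)⁻¹ • x s‖ ^ 2 / 2)
      (inner ℝ (z t) (-f - Real.log γ • z t) : ℝ) t := by
    have h := ((h1 t).inner ℝ (h1 t)).div_const 2
    have heq : (fun s => ‖(γ ^ s)⁻¹ • x s‖ ^ 2 / 2)
        = fun s => (inner ℝ (z s) (z s) : ℝ) / 2 := by
      funext s
      rw [real_inner_self_eq_norm_sq]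
    rw [heq]
    refine h.congr_deriv ?_
    rw [real_inner_comm]
    ring
  rw [hV.deriv]
  have hD : (inner ℝ (z t) (-f - Real.log γ • z t) : ℝ)
      = ∑ i, (-(u i * ⌊u i⌋) - Real.log γ * (u i * u i)) := by
    simp only [PiLp.inner_apply, RCLike.inner_apply, conj_trivial, PiLp.sub_apply,
      PiLp.neg_apply, PiLp.smul_apply, smul_eq_mul, hzt]
    simp only [hf, WithLp.equiv_symm_apply, PiLp.toLp_apply]
    exact Finset.sum_congr rfl fun i _ => by ring
  have hN : ‖z t‖ ^ 2 = ∑ i, u i * u i := by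
    rw [← real_inner_self_eq_norm_sq]
    simp only [PiLp.inner_apply, RCLike.inner_apply, conj_trivial, hzt]
  have key : ∀ v : ℝ, -(v * ⌊v⌋) - Real.log γ * (v * v) ≤ -a * (v * v) / 2 + 1 / (2 * a) := by
    intro v
    have h1' := Int.floor_le v
    have h2' := Int.lt_floor_add_one v
    have hla : Real.log γ = a - 1 := by simp [ha]
    have h2a : (0:ℝ) < 2 * a := by linarith
    rw [hla]
    have hkey := stmt5_aux a v ⌊v⌋ ha0 h1' h2'
    have := (le_div_iff₀ h2a).2 hkey
    linarith
  have hsum := Finset.sum_le_sum (fun i (_ : i ∈ Finset.univ) => key (u i))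
  rw [hD, hN]
  have hrw : ∑ i : Fin d, (-a * (u i * u i) / 2 + 1 / (2 * a))
      = -a * ((∑ i, u i * u i) / 2) + d / (2 * a) := by
    rw [Finset.sum_add_distrib, Finset.sum_const, Finset.card_univ, Fintype.card_fin,
      nsmul_eq_mul]
    rw [← Finset.sum_div, ← Finset.mul_sum]
    ring
  rw [hrw] at hsum
  exact hsum
end

section
/- Let f(x) = Σᵢ fᵢ(x) be μ-strongly convex on ℝ^d and each ∇fᵢ be L_f-Lipschitz. With the notation of the orthogonal decomposition (x̄_∥ = 1_⊗ᵀ(x − s), x̄_⊥ = S_⊗ᵀ(x − s), s = 1_n ⊗ s*, ∇f(s*) = 0), the function V₃ = ‖x̄_∥‖²/2 satisfies along ẋ̄_∥ = −η 1_⊗ᵀ F̃(x̄): V̇₃ ≤ −(ημ/(2n))‖x̄_∥‖² + (ηn/(2μ))L_f²‖x̄_⊥‖², where F̃(x̄) = F(x̄+s) − F(s). -/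
open Matrix Finset

lemma proj_id {n m d : ℕ} (hn : 0 < n) (S : Matrix (Fin n) (Fin m) ℝ)
    (hSST : S * Sᵀ = 1 - (n : ℝ)⁻¹ • Matrix.of fun _ _ => (1 : ℝ))
    (x : Fin n → EuclideanSpace ℝ (Fin d)) :
    ∑ k, ‖∑ i, S i k • x i‖ ^ 2
      = ∑ i, ‖x i - (n : ℝ)⁻¹ • ∑ j, x j‖ ^ 2 := by
  have key : ∀ i j, (∑ k, S i k * S j k) = (if i = j then (1:ℝ) else 0) - (n : ℝ)⁻¹ := by
    intro i j
    have h := congrFun (congrFun hSST i) j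
    simpa [Matrix.mul_apply, Matrix.one_apply, Matrix.sub_apply, Matrix.transpose_apply,
      Matrix.smul_apply] using h
  have hnn : (n : ℝ) ≠ 0 := Nat.cast_ne_zero.mpr hn.ne'
  simp_rw [← real_inner_self_eq_norm_sq, inner_sum, sum_inner, real_inner_smul_left,
    real_inner_smul_right, inner_sub_left, inner_sub_right, real_inner_smul_left,
    real_inner_smul_right, inner_sum, sum_inner]
  have hLHS : (∑ k : Fin m, ∑ j : Fin n, ∑ i : Fin n,
        S i k * (S j k * (inner ℝ (x i) (x j) : ℝ)))
      = ∑ j : Fin n, ∑ i : Fin n,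
        ((if i = j then (1:ℝ) else 0) - (n : ℝ)⁻¹) * (inner ℝ (x i) (x j) : ℝ) := by
    rw [Finset.sum_comm]
    refine Finset.sum_congr rfl fun j _ => ?_
    rw [Finset.sum_comm]
    refine Finset.sum_congr rfl fun i _ => ?_
    rw [← key i j, Finset.sum_mul]
    exact Finset.sum_congr rfl fun k _ => by ring
  rw [hLHS]
  simp only [sub_mul, ite_mul, one_mul, zero_mul, Finset.sum_sub_distrib,
    Finset.sum_ite_eq, Finset.mem_univ, if_true, ← Finset.mul_sum,
    Finset.sum_const, Finset.card_univ, Fintype.card_fin, nsmul_eq_mul]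
  have hT : (∑ j : Fin n, ∑ i : Fin n, (inner ℝ (x j) (x i) : ℝ))
      = ∑ j : Fin n, ∑ i : Fin n, (inner ℝ (x i) (x j) : ℝ) := Finset.sum_comm
  rw [hT]
  field_simp
  simp only [Finset.sum_ite_eq', Finset.mem_univ, if_true]
  ring

theorem stmt14 (n d : ℕ) (hn : 0 < n)
    (f : Fin n → EuclideanSpace ℝ (Fin d) → ℝ) (μ Lf η : ℝ)
    (hμ : 0 < μ) (hLf : 0 ≤ Lf) (hη : 0 < η)
    (hLip : ∀ i x y, ‖gradient (f i) x - gradient (f i) y‖ ≤ Lf * ‖x - y‖)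
    (sstar : EuclideanSpace ℝ (Fin d))
    (hsc : ∀ x y : EuclideanSpace ℝ (Fin d),
      μ * ‖x - y‖ ^ 2
        ≤ (inner ℝ (x - y) (∑ i, (gradient (f i) x - gradient (f i) y)) : ℝ))
    (S : Matrix (Fin n) (Fin (n - 1)) ℝ)
    (hSS : Sᵀ * S = 1) (hS1 : Sᵀ.mulVec (fun _ => 1) = 0)
    (hSST : S * Sᵀ = 1 - (n : ℝ)⁻¹ • Matrix.of fun _ _ => (1 : ℝ))
    (xbar : ℝ → Fin n → EuclideanSpace ℝ (Fin d))
    (hpar : ∀ t : ℝ, HasDerivAt (fun s => (Real.sqrt n)⁻¹ • ∑ i, xbar s i)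
      (-(η • ((Real.sqrt n)⁻¹ •
        ∑ i, (gradient (f i) (xbar t i + sstar) - gradient (f i) sstar)))) t) :
    ∀ t : ℝ, deriv (fun s => ‖(Real.sqrt n)⁻¹ • ∑ i, xbar s i‖ ^ 2 / 2) t
      ≤ -(η * μ / (2 * n)) * ‖(Real.sqrt n)⁻¹ • ∑ i, xbar t i‖ ^ 2
        + (η * n / (2 * μ)) * Lf ^ 2 * ∑ k, ‖∑ i, S i k • xbar t i‖ ^ 2 := by
  intro t
  have hnR : (0:ℝ) < n := by exact_mod_cast hn
  have hnn : (n:ℝ) ≠ 0 := hnR.ne'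
  set v : EuclideanSpace ℝ (Fin d) := ∑ i, xbar t i with hv
  set mv : EuclideanSpace ℝ (Fin d) := (n:ℝ)⁻¹ • v with hmv
  set G : EuclideanSpace ℝ (Fin d) :=
    ∑ i, (gradient (f i) (xbar t i + sstar) - gradient (f i) sstar) with hG
  set ct : EuclideanSpace ℝ (Fin d) := (Real.sqrt n)⁻¹ • v with hct
  -- derivative computation
  have hc := hpar t
  have hD : HasDerivAt (fun s => ‖(Real.sqrt n)⁻¹ • ∑ i, xbar s i‖ ^ 2 / 2)
      ((inner ℝ ct (-(η • ((Real.sqrt n)⁻¹ • G))) : ℝ)) t := by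
    have h2 := (hc.inner ℝ hc).div_const 2
    have heq : (fun s => (inner ℝ ((Real.sqrt n)⁻¹ • ∑ i, xbar s i)
        ((Real.sqrt n)⁻¹ • ∑ i, xbar s i) : ℝ) / 2)
        = fun s => ‖(Real.sqrt n)⁻¹ • ∑ i, xbar s i‖ ^ 2 / 2 := by
      funext s; rw [real_inner_self_eq_norm_sq]
    rw [heq] at h2
    refine h2.congr_deriv ?_
    rw [real_inner_comm (-(η • ((Real.sqrt n)⁻¹ • G))) ct]
    ring
  rw [hD.deriv]
  -- decompose G
  set A : EuclideanSpace ℝ (Fin d) :=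
    ∑ i, (gradient (f i) (mv + sstar) - gradient (f i) sstar) with hA
  set B : EuclideanSpace ℝ (Fin d) :=
    ∑ i, (gradient (f i) (xbar t i + sstar) - gradient (f i) (mv + sstar)) with hB
  have hGAB : G = A + B := by
    rw [hG, hA, hB, ← Finset.sum_add_distrib]
    exact Finset.sum_congr rfl fun i _ => by abel
  have hsqrt : (Real.sqrt n)⁻¹ * (Real.sqrt n)⁻¹ = (n:ℝ)⁻¹ := by
    rw [← mul_inv, Real.mul_self_sqrt hnR.le]
  -- strong convexity
  have hAbd : μ * ‖mv‖ ^ 2 ≤ (inner ℝ mv A : ℝ) := by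
    have h := hsc (mv + sstar) sstar
    simpa only [add_sub_cancel_right] using h
  -- Lipschitz bound on B
  have hBbd : ‖B‖ ≤ Lf * ∑ i, ‖xbar t i - mv‖ := by
    calc ‖B‖ ≤ ∑ i, ‖gradient (f i) (xbar t i + sstar) - gradient (f i) (mv + sstar)‖ :=
          norm_sum_le _ _
      _ ≤ ∑ i, Lf * ‖xbar t i - mv‖ := by
          refine Finset.sum_le_sum fun i _ => ?_
          have h := hLip i (xbar t i + sstar) (mv + sstar)
          simpa [add_sub_add_right_eq_sub] using h
      _ = Lf * ∑ i, ‖xbar t i - mv‖ := (Finset.mul_sum _ _ _).symm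
  -- inner product expansion
  have hvmv : v = (n:ℝ) • mv := by rw [hmv, smul_smul, mul_inv_cancel₀ hnn, one_smul]
  have hinner : (inner ℝ ct (-(η • ((Real.sqrt n)⁻¹ • G))) : ℝ)
      = -η * ((inner ℝ mv A : ℝ) + (inner ℝ mv B : ℝ)) := by
    rw [hct, hGAB]
    rw [inner_neg_right, real_inner_smul_right, real_inner_smul_left, real_inner_smul_right]
    rw [hvmv, real_inner_smul_left, inner_add_right]
    ring_nf
    have hsq2 : ((Real.sqrt n)⁻¹:ℝ) ^ 2 = (n:ℝ)⁻¹ := by rw [sq]; exact hsqrt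
    rw [hsq2]
    field_simp
  rw [hinner]
  -- Young per-term
  have hy : ∀ i : Fin n, Lf * ‖xbar t i - mv‖ * ‖mv‖
      ≤ μ / (2 * n) * ‖mv‖ ^ 2 + (n : ℝ) / (2 * μ) * Lf ^ 2 * ‖xbar t i - mv‖ ^ 2 := by
    intro i
    have hid : μ / (2 * n) * ‖mv‖ ^ 2 + (n : ℝ) / (2 * μ) * Lf ^ 2 * ‖xbar t i - mv‖ ^ 2
        - Lf * ‖xbar t i - mv‖ * ‖mv‖
        = (μ * ‖mv‖ - (n:ℝ) * (Lf * ‖xbar t i - mv‖)) ^ 2 / (2 * n * μ) := by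
      field_simp
      ring
    have hpos : (0:ℝ) ≤ (μ * ‖mv‖ - (n:ℝ) * (Lf * ‖xbar t i - mv‖)) ^ 2 / (2 * n * μ) :=
      div_nonneg (sq_nonneg _) (by positivity)
    linarith
  have hBmv : -(inner ℝ mv B : ℝ) ≤ ‖mv‖ * ‖B‖ := by
    have h := abs_real_inner_le_norm mv B
    have := neg_abs_le (inner ℝ mv B : ℝ)
    linarith [abs_le.mp h]
  have hmain : -η * ((inner ℝ mv A : ℝ) + (inner ℝ mv B : ℝ))
      ≤ -(η * μ / 2) * ‖mv‖ ^ 2 + η * ((n : ℝ) / (2 * μ) * Lf ^ 2 * ∑ i, ‖xbar t i - mv‖ ^ 2) := by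
    have h1 : ‖mv‖ * ‖B‖ ≤ ‖mv‖ * (Lf * ∑ i, ‖xbar t i - mv‖) :=
      mul_le_mul_of_nonneg_left hBbd (norm_nonneg _)
    have h2 : ‖mv‖ * (Lf * ∑ i, ‖xbar t i - mv‖)
        = ∑ i, Lf * ‖xbar t i - mv‖ * ‖mv‖ := by
      rw [Finset.mul_sum, Finset.mul_sum]
      exact Finset.sum_congr rfl fun i _ => by ring
    have h3 : (∑ i, Lf * ‖xbar t i - mv‖ * ‖mv‖)
        ≤ ∑ i : Fin n, (μ / (2 * n) * ‖mv‖ ^ 2 + (n : ℝ) / (2 * μ) * Lf ^ 2 * ‖xbar t i - mv‖ ^ 2) :=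
      Finset.sum_le_sum fun i _ => hy i
    have h4 : (∑ i : Fin n, (μ / (2 * n) * ‖mv‖ ^ 2 + (n : ℝ) / (2 * μ) * Lf ^ 2 * ‖xbar t i - mv‖ ^ 2))
        = μ / 2 * ‖mv‖ ^ 2 + (n : ℝ) / (2 * μ) * Lf ^ 2 * ∑ i, ‖xbar t i - mv‖ ^ 2 := by
      rw [Finset.sum_add_distrib, Finset.sum_const, Finset.card_univ, Fintype.card_fin,
        nsmul_eq_mul, ← Finset.mul_sum]
      field_simp
    have h5 : -(inner ℝ mv B : ℝ) ≤ μ / 2 * ‖mv‖ ^ 2 + (n : ℝ) / (2 * μ) * Lf ^ 2 * ∑ i, ‖xbar t i - mv‖ ^ 2 := by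
      calc -(inner ℝ mv B : ℝ) ≤ ‖mv‖ * ‖B‖ := hBmv
        _ ≤ ∑ i, Lf * ‖xbar t i - mv‖ * ‖mv‖ := by rw [← h2]; exact h1
        _ ≤ _ := le_of_le_of_eq h3 h4
    have e1 := mul_le_mul_of_nonneg_left hAbd hη.le
    have e2 := mul_le_mul_of_nonneg_left h5 hη.le
    generalize hiA : (inner ℝ mv A : ℝ) = iA at e1 ⊢
    generalize hiB : (inner ℝ mv B : ℝ) = iB at e2 ⊢
    generalize ha : ‖mv‖ ^ 2 = a at e1 e2 ⊢
    generalize hKK : (∑ i, ‖xbar t i - mv‖ ^ 2 : ℝ) = K at e2 ⊢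
    linarith [e1, e2]
  refine le_trans hmain (le_of_eq ?_)
  -- final bookkeeping
  have hKs : (∑ k, ‖∑ i, S i k • xbar t i‖ ^ 2) = ∑ i, ‖xbar t i - mv‖ ^ 2 := by
    rw [proj_id hn S hSST (xbar t)]
  have hctn : ‖ct‖ ^ 2 = (n:ℝ)⁻¹ * ‖v‖ ^ 2 := by
    rw [hct, norm_smul, Real.norm_eq_abs, mul_pow, sq_abs, sq, hsqrt]
  have hmvn : ‖mv‖ ^ 2 = (n:ℝ)⁻¹ * ((n:ℝ)⁻¹ * ‖v‖ ^ 2) := by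
    rw [hmv, norm_smul, Real.norm_eq_abs, mul_pow, sq_abs, sq]
    ring
  rw [hKs, hmvn, hctn]
  generalize (∑ i, ‖xbar t i - mv‖ ^ 2 : ℝ) = K
  generalize ‖v‖ ^ 2 = w
  field_simp
end
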